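/- arXiv:1204.5767 — 7 statements merged into one kernel-verified Lean document; each statement's English description precedes it below -/
import Mathlib

section
/- Let X be a finite partially ordered set and let r ∈ ℂ. Then ∑_L r^{p(L)} · (1 − r)^{|X| − |L|} = 1, where the sum ranges over all lower sets L of X (subsets L ⊆ X such that y ≤ z and z ∈ L imply y ∈ L), p(L) denotes the number of maximal elements of L (elements m ∈ L such that there is no l ∈ L with m < l), and |·| denotes cardinality. (This is Theorem 6.1: the complex percolation transition amplitudes a(x→y) = m(x→y) r^p (1−r)^u sum to 1 over all causets y produced by x.) -/
open Finset

set_option linter.unusedSectionVars false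

section Aux

variable {X : Type*} [Fintype X] [PartialOrder X] [DecidableEq X]
    [DecidableRel ((· ≤ ·) : X → X → Prop)] [DecidableRel ((· < ·) : X → X → Prop)]

/-- down-closure of a finset -/
private def Dcl (S : Finset X) : Finset X := univ.filter (fun y => ∃ s ∈ S, y ≤ s)

/-- maximal elements of a finset -/
private def Mx (L : Finset X) : Finset X := L.filter (fun m => ∀ l ∈ L, ¬ m < l)

private lemma mem_Dcl {S : Finset X} {y : X} : y ∈ Dcl S ↔ ∃ s ∈ S, y ≤ s := by
  simp [Dcl]

private lemma Mx_subset (L : Finset X) : Mx L ⊆ L := filter_subset _ _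

private lemma exists_le_max {L : Finset X} {l : X} (hl : l ∈ L) : ∃ m ∈ Mx L, l ≤ m := by
  classical
  obtain ⟨m, hm, hmax⟩ : ∃ m ∈ L.filter (fun z => l ≤ z), ∀ x ∈ L.filter (fun z => l ≤ z), ¬ m < x := by
    obtain ⟨m, hm⟩ := Finset.exists_maximal (s := L.filter (fun z => l ≤ z)) ⟨l, by simp [hl]⟩
    exact ⟨m, hm.1, fun x hx hlt => hlt.not_ge (hm.2 hx hlt.le)⟩
  simp only [mem_filter] at hm
  refine ⟨m, ?_, hm.2⟩
  simp only [Mx, mem_filter]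
  exact ⟨hm.1, fun l' hl' hlt => hmax l' (mem_filter.2 ⟨hl', hm.2.trans hlt.le⟩) hlt⟩

private lemma Dcl_eq_iff {L S : Finset X}
    (hL : ∀ y z : X, z ∈ L → y ≤ z → y ∈ L) :
    Dcl S = L ↔ Mx L ⊆ S ∧ S ⊆ L := by
  constructor
  · rintro rfl
    refine ⟨?_, fun s hs => mem_Dcl.2 ⟨s, hs, le_refl s⟩⟩
    intro m hm
    simp only [Mx, mem_filter] at hm
    obtain ⟨s, hs, hms⟩ := mem_Dcl.1 hm.1
    rcases eq_or_lt_of_le hms with rfl | hlt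
    · exact hs
    · exact absurd hlt (hm.2 s (mem_Dcl.2 ⟨s, hs, le_refl s⟩))
  · rintro ⟨hMS, hSL⟩
    apply Finset.Subset.antisymm
    · intro y hy
      obtain ⟨s, hs, hys⟩ := mem_Dcl.1 hy
      exact hL y s (hSL hs) hys
    · intro l hl
      obtain ⟨m, hm, hlm⟩ := exists_le_max hl
      exact mem_Dcl.2 ⟨m, hMS hm, hlm⟩

private lemma Dcl_lower (S : Finset X) :
    ∀ y z : X, z ∈ Dcl S → y ≤ z → y ∈ Dcl S := by
  intro y z hz hyz
  obtain ⟨s, hs, hzs⟩ := mem_Dcl.1 hz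
  exact mem_Dcl.2 ⟨s, hs, hyz.trans hzs⟩

private lemma sum_powerset_one (s : Finset X) (r : ℂ) :
    ∑ t ∈ s.powerset, r ^ t.card * (1 - r) ^ (s.card - t.card) = 1 := by
  have h := Finset.prod_add (fun _ : X => r) (fun _ : X => 1 - r) s
  simp only [Finset.prod_const] at h
  have h2 : ∑ t ∈ s.powerset, r ^ t.card * (1 - r) ^ (s.card - t.card)
      = ∑ t ∈ s.powerset, r ^ t.card * (1 - r) ^ (s \ t).card :=
    Finset.sum_congr rfl fun t ht => by rw [card_sdiff_of_subset (mem_powerset.1 ht)]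
  rw [h2, ← h]
  simp

end Aux

/-- **Theorem 6.1** (complex percolation amplitudes sum to one).
For a finite poset `X` and `r ∈ ℂ`, the sum over all lower sets `L` of `X` of
`r ^ p(L) * (1 - r) ^ (|X| - |L|)` equals `1`, where `p(L)` is the number of
maximal elements of `L`. -/
theorem stmt0 {X : Type*} [Fintype X] [PartialOrder X] [DecidableEq X]
    [DecidableRel ((· ≤ ·) : X → X → Prop)] [DecidableRel ((· < ·) : X → X → Prop)]
    (r : ℂ) :
    ∑ L ∈ Finset.univ.filter
        (fun L : Finset X => ∀ y z : X, z ∈ L → y ≤ z → y ∈ L),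
      r ^ (L.filter (fun m => ∀ l ∈ L, ¬ m < l)).card *
        (1 - r) ^ (Fintype.card X - L.card) = 1 := by
  classical
  set n := Fintype.card X with hn
  set f : Finset X → ℂ := fun S => r ^ S.card * (1 - r) ^ (n - S.card) with hf
  have total : ∑ S : Finset X, f S = 1 := by
    have := sum_powerset_one (univ : Finset X) r
    rw [Finset.powerset_univ] at this
    simpa [hf, hn, Finset.card_univ] using this
  have maps : ∀ S ∈ (univ : Finset (Finset X)),
      Dcl S ∈ Finset.univ.filter
        (fun L : Finset X => ∀ y z : X, z ∈ L → y ≤ z → y ∈ L) :=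
    fun S _ => mem_filter.2 ⟨mem_univ _, Dcl_lower S⟩
  have fib := Finset.sum_fiberwise_of_maps_to maps f
  rw [total] at fib
  conv_rhs => rw [← fib]
  refine (Finset.sum_congr rfl ?_).symm
  intro L hL
  have hLlow : ∀ y z : X, z ∈ L → y ≤ z → y ∈ L := (mem_filter.1 hL).2
  have hfil : (univ : Finset (Finset X)).filter (fun S => Dcl S = L)
      = (univ : Finset (Finset X)).filter (fun S => Mx L ⊆ S ∧ S ⊆ L) := by
    apply Finset.filter_congr
    intro S _
    exact Dcl_eq_iff hLlow
  rw [hfil]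
  set p := (Mx L).card with hp
  have hgoalM : (L.filter (fun m => ∀ l ∈ L, ¬ m < l)) = Mx L := rfl
  rw [hgoalM]
  set s := L \ Mx L with hs
  have hML : Mx L ⊆ L := Mx_subset L
  have hcardL : L.card = p + s.card := by
    rw [hs, card_sdiff_of_subset hML]
    have := Finset.card_le_card hML
    omega
  have hLn : L.card ≤ n := by
    simpa [hn] using Finset.card_le_univ L
  have key : ∑ S ∈ (univ : Finset (Finset X)).filter (fun S => Mx L ⊆ S ∧ S ⊆ L), f S
      = ∑ T ∈ s.powerset, r ^ (p + T.card) * (1 - r) ^ (n - (p + T.card)) := by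
    apply Finset.sum_nbij' (i := fun S => S \ Mx L) (j := fun T => Mx L ∪ T)
    · intro S hS
      simp only [mem_filter, mem_univ, true_and] at hS
      exact mem_powerset.2 (sdiff_subset_sdiff hS.2 Subset.rfl)
    · intro T hT
      have hT' := mem_powerset.1 hT
      simp only [mem_filter, mem_univ, true_and]
      exact ⟨subset_union_left, union_subset hML (hT'.trans sdiff_subset)⟩
    · intro S hS
      simp only [mem_filter, mem_univ, true_and] at hS
      exact Finset.union_sdiff_of_subset hS.1
    · intro T hT
      have hT' := mem_powerset.1 hT
      have hdisj : Disjoint (Mx L) T :=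
        (Finset.disjoint_of_subset_right hT' Finset.sdiff_disjoint.symm)
      exact Finset.union_sdiff_cancel_left hdisj
    · intro S hS
      simp only [mem_filter, mem_univ, true_and] at hS
      have : S.card = p + (S \ Mx L).card := by
        rw [card_sdiff_of_subset hS.1]
        have := Finset.card_le_card hS.1
        omega
      rw [hf]
      simp only [← this]
  rw [key]
  have split : ∀ T ∈ s.powerset,
      r ^ (p + T.card) * (1 - r) ^ (n - (p + T.card))
      = (r ^ p * (1 - r) ^ (n - L.card)) * (r ^ T.card * (1 - r) ^ (s.card - T.card)) := by
    intro T hT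
    have hTs := Finset.card_le_card (mem_powerset.1 hT)
    have e1 : n - (p + T.card) = (n - L.card) + (s.card - T.card) := by omega
    rw [e1, pow_add, pow_add]
    ring
  rw [Finset.sum_congr rfl split, ← Finset.mul_sum, sum_powerset_one s r, mul_one]
end

section
/- For every n ≥ 1, the sum of the amplitudes of all n-paths equals one: ∑_{ω ∈ Ω_n} a_n(ω) = 1. (This is equation (5.3), the key step in proving that an amplitude process is a quantum sequential growth process.) -/
variable {V : Type*} [Fintype V] [DecidableEq V]

/-- An `n`-path: `ω 0 = v₀` and each entry is a successor of the previous one. -/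
def IsPath (v₀ : V) (succ : V → Finset V) (n : ℕ) (ω : Fin n → V) : Prop :=
  (∀ i : Fin n, (i : ℕ) = 0 → ω i = v₀) ∧
    ∀ i j : Fin n, (j : ℕ) = (i : ℕ) + 1 → ω j ∈ succ (ω i)

instance (v₀ : V) (succ : V → Finset V) (n : ℕ) :
    DecidablePred (IsPath v₀ succ n) := fun ω => by
  unfold IsPath; infer_instance

/-- `Ω_n`, the finite set of `n`-paths. -/
def pathSet (v₀ : V) (succ : V → Finset V) (n : ℕ) : Finset (Fin n → V) :=
  Finset.univ.filter (IsPath v₀ succ n)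

/-- The amplitude `a_n(ω) = ∏_{k=0}^{n-2} a (ω k) (ω (k+1))`. -/
noncomputable def amp (a : V → V → ℂ) (n : ℕ) (ω : Fin n → V) : ℂ :=
  ∏ k : Fin (n - 1),
    a (ω ⟨k.1, by have := k.2; omega⟩) (ω ⟨k.1 + 1, by have := k.2; omega⟩)

/-- **Equation (5.3)**: the amplitudes of all `n`-paths sum to one. -/
theorem stmt1 (v₀ : V) (succ : V → Finset V) (a : V → V → ℂ)
    (ha : ∀ x : V, ∑ y ∈ succ x, a x y = 1) (n : ℕ) (hn : 1 ≤ n) :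
    ∑ ω ∈ pathSet v₀ succ n, amp a n ω = 1 := by
  obtain ⟨m, rfl⟩ : ∃ m, n = m + 1 := ⟨n - 1, by omega⟩
  clear hn
  induction m with
  | zero =>
    have hset : pathSet v₀ succ 1 = {fun _ => v₀} := by
      ext ω
      simp only [pathSet, Finset.mem_filter, Finset.mem_univ, true_and,
        Finset.mem_singleton, IsPath]
      constructor
      · rintro ⟨h0, -⟩
        funext i
        exact h0 i (by have := i.2; omega)
      · rintro rfl
        exact ⟨fun i _ => rfl, fun i j hj => absurd hj (by have := j.2; omega)⟩
    rw [hset]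
    simp [amp]
  | succ m ih =>
    have hsnoc_lt : ∀ (τ : Fin (m+1) → V) (y : V) (k : ℕ) (h : k < m + 2)
        (hk : k < m + 1), (Fin.snoc τ y : Fin (m+2) → V) ⟨k, h⟩ = τ ⟨k, hk⟩ := by
      intro τ y k h hk
      simp [Fin.snoc, hk]
    have hsnoc_last : ∀ (τ : Fin (m+1) → V) (y : V) (h : m + 1 < m + 2),
        (Fin.snoc τ y : Fin (m+2) → V) ⟨m+1, h⟩ = y := by
      intro τ y h
      simp [Fin.snoc]
    have key : ∀ (τ : Fin (m+1) → V) (y : V),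
        Fin.snoc τ y ∈ pathSet v₀ succ (m+2) ↔
          τ ∈ pathSet v₀ succ (m+1) ∧ y ∈ succ (τ (Fin.last m)) := by
      intro τ y
      simp only [pathSet, Finset.mem_filter, Finset.mem_univ, true_and, IsPath]
      constructor
      · rintro ⟨h0, hs⟩
        refine ⟨⟨fun i hi => ?_, fun i j hj => ?_⟩, ?_⟩
        · have := h0 ⟨i.1, by omega⟩ hi
          rwa [hsnoc_lt τ y i.1 (by omega) i.2] at this
        · have := hs ⟨i.1, by omega⟩ ⟨j.1, by omega⟩ hj
          rwa [hsnoc_lt τ y i.1 (by omega) i.2,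
            hsnoc_lt τ y j.1 (by omega) j.2] at this
        · have := hs ⟨m, by omega⟩ ⟨m+1, by omega⟩ rfl
          rwa [hsnoc_lt τ y m (by omega) (by omega), hsnoc_last] at this
      · rintro ⟨⟨h0, hs⟩, hy⟩
        refine ⟨fun i hi => ?_, fun i j hj => ?_⟩
        · have hi1 : i.1 < m + 1 := by omega
          rw [show i = (⟨i.1, i.2⟩ : Fin (m+2)) from rfl,
            hsnoc_lt τ y i.1 i.2 hi1]
          exact h0 ⟨i.1, hi1⟩ hi
        · rcases Nat.lt_or_ge j.1 (m+1) with hj1 | hj1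
          · rw [show i = (⟨i.1, i.2⟩ : Fin (m+2)) from rfl,
              show j = (⟨j.1, j.2⟩ : Fin (m+2)) from rfl,
              hsnoc_lt τ y i.1 i.2 (by omega), hsnoc_lt τ y j.1 j.2 hj1]
            exact hs ⟨i.1, by omega⟩ ⟨j.1, hj1⟩ hj
          · have hj2 : j.1 = m + 1 := by have := j.2; omega
            have hi2 : i.1 = m := by omega
            rw [show i = (⟨i.1, i.2⟩ : Fin (m+2)) from rfl,
              show j = (⟨j.1, j.2⟩ : Fin (m+2)) from rfl,
              hsnoc_lt τ y i.1 i.2 (by omega)]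
            have : (Fin.snoc τ y : Fin (m+2) → V) ⟨j.1, j.2⟩ = y := by
              rw [show (⟨j.1, j.2⟩ : Fin (m+2)) = ⟨m+1, by omega⟩ from
                Fin.ext hj2, hsnoc_last]
            rw [this]
            have : (⟨i.1, by omega⟩ : Fin (m+1)) = Fin.last m := Fin.ext hi2
            rw [this]
            exact hy
    have hamp : ∀ (τ : Fin (m+1) → V) (y : V),
        amp a (m+2) (Fin.snoc τ y) = amp a (m+1) τ * a (τ (Fin.last m)) y := by
      intro τ y
      unfold amp
      show (∏ k : Fin (m+1),
          a ((Fin.snoc τ y : Fin (m+2) → V) ⟨k.1, by have := k.2; omega⟩)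
            ((Fin.snoc τ y : Fin (m+2) → V) ⟨k.1+1, by have := k.2; omega⟩)) =
        (∏ k : Fin m, a (τ ⟨k.1, by have := k.2; omega⟩)
          (τ ⟨k.1+1, by have := k.2; omega⟩)) * a (τ (Fin.last m)) y
      rw [Fin.prod_univ_castSucc]
      congr 1
      · refine Finset.prod_congr rfl fun k _ => ?_
        simp only [Fin.coe_castSucc]
        rw [hsnoc_lt τ y k.1 (by have := k.2; omega) (by have := k.2; omega),
          hsnoc_lt τ y (k.1+1) (by have := k.2; omega) (by have := k.2; omega)]
      · simp only [Fin.val_last]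
        rw [hsnoc_lt τ y m (by omega) (by omega), hsnoc_last]
        rfl
    have hbij : ∑ ω ∈ pathSet v₀ succ (m+2), amp a (m+2) ω =
        ∑ p ∈ (pathSet v₀ succ (m+1)).sigma (fun τ => succ (τ (Fin.last m))),
          amp a (m+2) (Fin.snoc p.1 p.2) := by
      refine (Finset.sum_bij (fun p _ => Fin.snoc p.1 p.2) ?_ ?_ ?_ ?_).symm
      · intro p hp
        rw [Finset.mem_sigma] at hp
        exact (key p.1 p.2).2 hp
      · intro p hp q hq h
        have h1 : p.1 = q.1 := by
          funext i
          have := congrFun h (Fin.castSucc i)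
          simpa using this
        have h2 : p.2 = q.2 := by
          have := congrFun h (Fin.last (m+1))
          simpa using this
        exact Sigma.ext h1 (by rw [h2])
      · intro ω hω
        refine ⟨⟨fun i => ω (Fin.castSucc i), ω (Fin.last (m+1))⟩, ?_, ?_⟩
        · rw [Finset.mem_sigma]
          have : Fin.snoc (fun i => ω (Fin.castSucc i)) (ω (Fin.last (m+1)))
              = ω := by
            funext i
            refine Fin.lastCases ?_ (fun j => ?_) i
            · simp
            · simp
          exact (key _ _).1 (by rw [this]; exact hω)
        · funext i
          refine Fin.lastCases ?_ (fun j => ?_) i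
          · simp
          · simp
      · intro p hp
        rfl
    rw [hbij, Finset.sum_sigma]
    simp only [hamp]
    rw [Finset.sum_congr rfl fun τ _ => ?_]
    · exact ih
    · rw [← Finset.mul_sum, ha, mul_one]
end

section
/- The amplitude-process decoherence functionals are consistent: for every n ≥ 1 and all A, B ⊆ Ω_n, D_{n+1}(A→, B→) = D_n(A, B). In particular μ_{n+1}(A→) = μ_n(A) for all A ⊆ Ω_n. (This is the consistency part of Theorem 5.1.) -/
variable {V : Type*} [Fintype V] [DecidableEq V]

/-- The decoherence functional `D_n(A,B) = (∑_{ω ∈ A} a_n(ω)) ⬝ conj (∑_{ω' ∈ B} a_n(ω'))`. -/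
noncomputable def Dfun (a : V → V → ℂ) (n : ℕ) (A B : Finset (Fin n → V)) : ℂ :=
  (∑ ω ∈ A, amp a n ω) * (starRingEnd ℂ) (∑ ω ∈ B, amp a n ω)

/-- The `q`-measure `μ_n(A) = |∑_{ω ∈ A} a_n(ω)|²`. -/
noncomputable def qMeas (a : V → V → ℂ) (n : ℕ) (A : Finset (Fin n → V)) : ℝ :=
  Complex.normSq (∑ ω ∈ A, amp a n ω)

/-- The one-step extension `A→ = {ω ∈ Ω_{n+1} : ω|_{Fin n} ∈ A}`. -/
def ext (v₀ : V) (succ : V → Finset V) {n : ℕ} (A : Finset (Fin n → V)) :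
    Finset (Fin (n + 1) → V) :=
  (pathSet v₀ succ (n + 1)).filter (fun ω => (fun k : Fin n => ω k.castSucc) ∈ A)


lemma amp_snoc (a : V → V → ℂ) (m : ℕ) (ω : Fin (m + 1) → V) (y : V) :
    amp a (m + 2) (Fin.snoc ω y) = amp a (m + 1) ω * a (ω (Fin.last m)) y := by
  unfold amp
  show (∏ k : Fin (m + 1), a ((Fin.snoc ω y : Fin (m + 2) → V) (⟨k.1, by have := k.2; omega⟩ : Fin (m + 2)))
      ((Fin.snoc ω y : Fin (m + 2) → V) (⟨k.1 + 1, by have := k.2; omega⟩ : Fin (m + 2))))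
    = (∏ k : Fin m, a (ω (⟨k.1, by have := k.2; omega⟩ : Fin (m + 1)))
      (ω (⟨k.1 + 1, by have := k.2; omega⟩ : Fin (m + 1)))) * a (ω (Fin.last m)) y
  rw [Fin.prod_univ_castSucc]
  congr 1
  · apply Finset.prod_congr rfl
    intro k _
    have h1 : (⟨(k.castSucc).1, by have := k.2; omega⟩ : Fin (m + 2)) =
        Fin.castSucc ⟨k.1, by have := k.2; omega⟩ := rfl
    have h2 : (⟨(k.castSucc).1 + 1, by have := k.2; omega⟩ : Fin (m + 2)) =
        Fin.castSucc ⟨k.1 + 1, by have := k.2; omega⟩ := rfl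
    rw [h1, h2, Fin.snoc_castSucc, Fin.snoc_castSucc]
  · have h1 : (⟨(Fin.last m).1, by omega⟩ : Fin (m + 2)) = Fin.castSucc (Fin.last m) := rfl
    have h2 : (⟨(Fin.last m).1 + 1, by omega⟩ : Fin (m + 2)) = Fin.last (m + 1) := rfl
    rw [h1, h2, Fin.snoc_castSucc, Fin.snoc_last]

lemma sum_ext (v₀ : V) (succ : V → Finset V) (a : V → V → ℂ)
    (ha : ∀ x : V, ∑ y ∈ succ x, a x y = 1) (m : ℕ)
    (A : Finset (Fin (m + 1) → V)) (hA : A ⊆ pathSet v₀ succ (m + 1)) :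
    ∑ τ ∈ ext v₀ succ A, amp a (m + 2) τ = ∑ ω ∈ A, amp a (m + 1) ω := by
  have hRHS : ∑ ω ∈ A, amp a (m + 1) ω
      = ∑ ω ∈ A, ∑ y ∈ succ (ω (Fin.last m)), amp a (m + 1) ω * a (ω (Fin.last m)) y := by
    apply Finset.sum_congr rfl
    intro ω _
    rw [← Finset.mul_sum, ha, mul_one]
  rw [hRHS, Finset.sum_sigma']
  symm
  refine Finset.sum_bij' (fun p _ => Fin.snoc p.1 p.2)
    (fun τ _ => ⟨fun k => τ k.castSucc, τ (Fin.last (m + 1))⟩) ?_ ?_ ?_ ?_ ?_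
  · intro p hp
    simp only [Finset.mem_sigma] at hp
    obtain ⟨hω, hy⟩ := hp
    have hpath := hA hω
    simp only [pathSet, Finset.mem_filter, Finset.mem_univ, true_and] at hpath
    simp only [ext, pathSet, Finset.mem_filter, Finset.mem_univ, true_and]
    constructor
    · constructor
      · intro i hi
        have hi' : i = Fin.castSucc ⟨0, by omega⟩ := by
          apply Fin.ext; simpa using hi
        rw [hi', Fin.snoc_castSucc]
        exact hpath.1 ⟨0, by omega⟩ rfl
      · intro i j hij
        by_cases hj : (j : ℕ) < m + 1
        · have hi2 : (i : ℕ) < m + 1 := by omega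
          have : i = Fin.castSucc ⟨i, hi2⟩ := rfl
          rw [this, Fin.snoc_castSucc]
          have : j = Fin.castSucc ⟨j, hj⟩ := rfl
          rw [this, Fin.snoc_castSucc]
          exact hpath.2 ⟨i, hi2⟩ ⟨j, hj⟩ hij
        · have hj' : j = Fin.last (m + 1) := by apply Fin.ext; simp; omega
          have hi' : i = Fin.castSucc (Fin.last m) := by apply Fin.ext; simp; omega
          rw [hj', hi', Fin.snoc_castSucc, Fin.snoc_last]
          exact hy
    · have : (fun k : Fin (m + 1) => (Fin.snoc p.1 p.2 : Fin (m + 2) → V) k.castSucc) = p.1 := by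
        funext k; rw [Fin.snoc_castSucc]
      rw [this]; exact hω
  · intro τ hτ
    simp only [ext, pathSet, Finset.mem_filter, Finset.mem_univ, true_and] at hτ
    obtain ⟨hpath, hmem⟩ := hτ
    simp only [Finset.mem_sigma]
    refine ⟨hmem, ?_⟩
    exact hpath.2 (Fin.castSucc (Fin.last m)) (Fin.last (m + 1)) (by simp)
  · rintro ⟨ω, y⟩ hp
    simp only [Fin.snoc_last]
    congr 1
    funext k; rw [Fin.snoc_castSucc]
  · intro τ hτ
    exact Fin.snoc_init_self τ
  · intro p hp
    exact (amp_snoc a m p.1 p.2).symm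

/-- **Theorem 5.1** (consistency part): `D_{n+1}(A→, B→) = D_n(A, B)`, and in
particular `μ_{n+1}(A→) = μ_n(A)`. -/
theorem stmt2 (v₀ : V) (succ : V → Finset V) (a : V → V → ℂ)
    (ha : ∀ x : V, ∑ y ∈ succ x, a x y = 1) (n : ℕ) (hn : 1 ≤ n)
    (A B : Finset (Fin n → V))
    (hA : A ⊆ pathSet v₀ succ n) (hB : B ⊆ pathSet v₀ succ n) :
    Dfun a (n + 1) (ext v₀ succ A) (ext v₀ succ B) = Dfun a n A B ∧
      qMeas a (n + 1) (ext v₀ succ A) = qMeas a n A := by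
  obtain ⟨m, rfl⟩ : ∃ m, n = m + 1 := ⟨n - 1, by omega⟩
  have hA' := sum_ext v₀ succ a ha m A hA
  have hB' := sum_ext v₀ succ a ha m B hB
  constructor
  · unfold Dfun; rw [hA', hB']
  · unfold qMeas; rw [hA']
end

section
/- A linear map Λ : (Q × Q → ℂ) → (Q × Q → ℂ) satisfies both (i) for every g : Q → ℂ and all x, y ∈ Q, Λ(fun (x,y) ↦ g x)(x,y) = Δ_{σ,S} g (x) · 𝟙_T(y) and Λ(fun (x,y) ↦ g y)(x,y) = Δ_{τ,T} g (y) · 𝟙_S(x), and (ii) the Leibniz rule Λ(f·g)(x,y) = f(x,y) · Λg(x,y) + g(σ x, τ y) · Λf(x,y) for all f, g : Q × Q → ℂ and all x, y ∈ Q, if and only if Λ is the bidifference operator: Λf(x,y) = (f(x,y) − f(σ x, τ y)) · 𝟙_S(x) · 𝟙_T(y) for all f, x, y. (This is Theorem 4.1, characterizing the bidifference operator Δ_{ω,ω'}^n.) -/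
/-- The difference operator `Δ_{σ,S} g (x) = (g x − g (σ x)) ⬝ 𝟙_S(x)`. -/
noncomputable def diffOp {Q : Type*} (σ : Q → Q) (S : Set Q)
    (g : Q → ℂ) (x : Q) : ℂ :=
  (g x - g (σ x)) * S.indicator 1 x

/-- The bidifference operator
`Δ f (x,y) = (f(x,y) − f(σ x, τ y)) ⬝ 𝟙_S(x) ⬝ 𝟙_T(y)`. -/
noncomputable def bidiffOp {Q : Type*} (σ τ : Q → Q) (S T : Set Q)
    (f : Q × Q → ℂ) (p : Q × Q) : ℂ :=
  (f p - f (σ p.1, τ p.2)) * S.indicator 1 p.1 * T.indicator 1 p.2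

/-- The bidifference operator as a linear map. -/
noncomputable def bidiffLM {Q : Type*} (σ τ : Q → Q) (S T : Set Q) :
    (Q × Q → ℂ) →ₗ[ℂ] (Q × Q → ℂ) where
  toFun := bidiffOp σ τ S T
  map_add' f g := by funext p; simp [bidiffOp]; ring
  map_smul' c f := by funext p; simp [bidiffOp]; ring

/-- **Theorem 4.1**: a linear map `Λ` on `Q × Q → ℂ` satisfies (i) the
compatibility conditions with the one-variable difference operators and (ii)
the Leibniz rule iff `Λ` is the bidifference operator. -/
theorem stmt4 {Q : Type*} [Fintype Q] (σ τ : Q → Q) (S T : Set Q)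
    (Λ : (Q × Q → ℂ) →ₗ[ℂ] (Q × Q → ℂ)) :
    ((∀ g : Q → ℂ, ∀ x y : Q,
        Λ (fun p => g p.1) (x, y) = diffOp σ S g x * T.indicator 1 y ∧
        Λ (fun p => g p.2) (x, y) = diffOp τ T g y * S.indicator 1 x) ∧
      (∀ f g : Q × Q → ℂ, ∀ x y : Q,
        Λ (f * g) (x, y) = f (x, y) * Λ g (x, y) + g (σ x, τ y) * Λ f (x, y))) ↔
    ∀ f : Q × Q → ℂ, ∀ p : Q × Q, Λ f p = bidiffOp σ τ S T f p := by
  classical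
  constructor
  · rintro ⟨h1, h2⟩
    have key : Λ = bidiffLM σ τ S T := by
      apply Module.Basis.ext (Pi.basisFun ℂ (Q × Q))
      rintro ⟨a, b⟩
      have hsingle : (Pi.basisFun ℂ (Q × Q)) (a, b) =
          (fun p : Q × Q => if p.1 = a then (1 : ℂ) else 0) *
          (fun p : Q × Q => if p.2 = b then (1 : ℂ) else 0) := by
        funext p
        simp only [Pi.basisFun_apply, Pi.mul_apply, Pi.single_apply]
        by_cases h : p = (a, b)
        · subst h; simp
        · rw [if_neg h]
          rcases Decidable.em (p.1 = a) with ha | ha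
          · have hb : p.2 ≠ b := fun hb => h (Prod.ext ha hb)
            simp [ha, hb]
          · simp [ha]
      rw [hsingle]
      funext p
      obtain ⟨x, y⟩ := p
      rw [h2]
      have e1 := (h1 (fun z => if z = a then (1 : ℂ) else 0) x y).1
      have e2 := (h1 (fun z => if z = b then (1 : ℂ) else 0) x y).2
      rw [e1, e2]
      simp only [bidiffLM, LinearMap.coe_mk, AddHom.coe_mk, bidiffOp, diffOp,
        Pi.mul_apply]
      ring
    intro f p
    rw [key]
    rfl
  · intro h
    refine ⟨fun g x y => ⟨?_, ?_⟩, fun f g x y => ?_⟩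
    · rw [h]; simp only [bidiffOp, diffOp]; try ring
    · rw [h]; simp only [bidiffOp, diffOp]; try ring
    · rw [h, h, h]; simp only [bidiffOp, Pi.mul_apply]; try ring
end

section
/- A linear map T : (Q → ℂ) → (Q → ℂ) satisfies the Leibniz rule T(f·g)(x) = f(x) · Tg(x) + g(σ x) · Tf(x) for all f, g : Q → ℂ and x ∈ Q, together with the vanishing condition Tf(x) = 0 whenever x ∉ S, if and only if there exists a function β : Q → ℂ such that Tf(x) = β(x) · Δ_{σ,S} f (x) for all f : Q → ℂ and x ∈ Q. (This is Theorem 4.2(a).) -/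
/-- **Theorem 4.2(a)**: a linear map `T` on `Q → ℂ` satisfies the Leibniz rule
`T(f⬝g)(x) = f(x) ⬝ Tg(x) + g(σ x) ⬝ Tf(x)` and vanishes off `S` iff
`T = β ⬝ Δ_{σ,S}` for some `β : Q → ℂ`. -/
theorem stmt5 {Q : Type*} [Fintype Q] (σ : Q → Q) (S : Set Q)
    (T : (Q → ℂ) →ₗ[ℂ] (Q → ℂ)) :
    ((∀ f g : Q → ℂ, ∀ x : Q, T (f * g) x = f x * T g x + g (σ x) * T f x) ∧
      (∀ f : Q → ℂ, ∀ x : Q, x ∉ S → T f x = 0)) ↔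
    ∃ β : Q → ℂ, ∀ f : Q → ℂ, ∀ x : Q, T f x = β x * diffOp σ S f x := by
  classical
  constructor
  · rintro ⟨hL, hV⟩
    refine ⟨fun x => T (fun y => if y = x then 1 else 0) x, fun f x => ?_⟩
    by_cases hxS : x ∈ S
    · -- T 1 x = 0
      have hT1 : T 1 x = 0 := by
        have h := hL 1 1 x
        simp only [mul_one, one_mul, Pi.one_apply] at h
        linear_combination -h
      set c : ℂ := f (σ x) with hc
      set h : Q → ℂ := f - c • (1 : Q → ℂ) with hh
      have hTf : T f x = T h x := by
        have : T h = T f - c • T 1 := by simp [hh, map_sub, map_smul]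
        simp [this, hT1]
      by_cases hfix : σ x = x
      · -- fixed point case: T f x = 0, diffOp = 0
        have hhx : h x = 0 := by simp [hh, hc, hfix]
        set e : Q → ℂ := fun y => if y = x then 0 else 1 with he
        have hmul : h * e = h := by
          funext y
          by_cases hy : y = x
          · simp [he, hy, hhx, hy ▸ hhx]
          · simp [he, hy]
        have := hL h e x
        rw [hmul, hfix] at this
        have hex : e x = 0 := by simp [he]
        rw [hhx, hex] at this
        simp at this
        rw [hTf, this]
        simp [diffOp, hfix]
      · -- non-fixed point case
        set e : Q → ℂ := fun y => if y = x then 1 else 0 with he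
        have hesx : e (σ x) = 0 := by simp [he, hfix]
        have hex : e x = 1 := by simp [he]
        have hhsx : h (σ x) = 0 := by simp [hh, hc]
        have h1 := hL h e x
        have h2 := hL e h x
        rw [mul_comm] at h1
        rw [h1, hesx, hhsx, hex] at h2
        -- h2 : h x * T e x + 0 = 1 * T h x + 0 * T e x
        have hkey : T h x = h x * T e x := by linear_combination -h2
        rw [hTf, hkey]
        have hhx : h x = f x - f (σ x) := by simp [hh, hc]
        rw [hhx]
        simp [diffOp, Set.indicator_of_mem hxS]
        ring
    · rw [hV f x hxS]
      simp [diffOp, Set.indicator_of_notMem hxS]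
  · rintro ⟨β, hβ⟩
    constructor
    · intro f g x
      simp only [hβ, diffOp, Pi.mul_apply]
      ring
    · intro f x hx
      simp [hβ, diffOp, Set.indicator_of_notMem hx]
end

section
/- A linear map T : (Q × Q → ℂ) → (Q × Q → ℂ) satisfies the Leibniz rule T(f·g)(x,y) = f(x,y) · Tg(x,y) + g(σ x, τ y) · Tf(x,y) for all f, g : Q × Q → ℂ and all x, y ∈ Q, together with the vanishing condition Tf(x,y) = 0 whenever x ∉ S or y ∉ T, if and only if there exists a function β : Q × Q → ℂ such that Tf(x,y) = β(x,y) · (f(x,y) − f(σ x, τ y)) · 𝟙_S(x) · 𝟙_T(y) for all f, x, y. (This is Theorem 4.2(b).) -/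
/-- **Theorem 4.2(b)**: a linear map `T` on `Q × Q → ℂ` satisfies the Leibniz
rule `T(f⬝g)(x,y) = f(x,y) ⬝ Tg(x,y) + g(σ x, τ y) ⬝ Tf(x,y)` and vanishes when
`x ∉ S` or `y ∉ T'` iff there is `β : Q × Q → ℂ` with
`Tf(x,y) = β(x,y) ⬝ (f(x,y) − f(σ x, τ y)) ⬝ 𝟙_S(x) ⬝ 𝟙_{T'}(y)`. -/
theorem stmt6 {Q : Type*} [Fintype Q] (σ τ : Q → Q) (S T' : Set Q)
    (T : (Q × Q → ℂ) →ₗ[ℂ] (Q × Q → ℂ)) :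
    ((∀ f g : Q × Q → ℂ, ∀ x y : Q,
        T (f * g) (x, y) = f (x, y) * T g (x, y) + g (σ x, τ y) * T f (x, y)) ∧
      (∀ f : Q × Q → ℂ, ∀ x y : Q, x ∉ S ∨ y ∉ T' → T f (x, y) = 0)) ↔
    ∃ β : Q × Q → ℂ, ∀ f : Q × Q → ℂ, ∀ x y : Q,
      T f (x, y) = β (x, y) * (f (x, y) - f (σ x, τ y)) *
        S.indicator 1 x * T'.indicator 1 y := by
  classical
  constructor
  · rintro ⟨hL, hV⟩
    refine ⟨fun p => T (fun q => if q = p then 1 else 0) p, fun f x y => ?_⟩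
    by_cases hx : x ∈ S
    · by_cases hy : y ∈ T'
      · simp only [Set.indicator_of_mem hx, Set.indicator_of_mem hy, Pi.one_apply, mul_one]
        have hT1 : T 1 (x, y) = 0 := by
          have h := hL 1 1 x y
          simp only [mul_one, Pi.one_apply, one_mul] at h
          linear_combination -h
        by_cases hd : ((σ x, τ y) : Q × Q) = (x, y)
        · -- degenerate case: both sides are zero
          have hf : f (σ x, τ y) = f (x, y) := by rw [hd]
          rw [hf, sub_self, mul_zero]
          -- decompose f as a sum of delta functions
          have hdelta : ∀ p : Q × Q, T (fun q => if q = p then (1:ℂ) else 0) (x, y) = 0 := by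
            intro p
            set δ : Q × Q → ℂ := fun q => if q = p then (1:ℂ) else 0 with hδ
            have hsq : δ * δ = δ := by
              funext q; simp only [Pi.mul_apply, hδ]
              by_cases h : q = p <;> simp [h]
            have h := hL δ δ x y
            rw [hsq, hd] at h
            by_cases hp : ((x, y) : Q × Q) = p
            · have : δ (x, y) = 1 := by simp [hδ, hp]
              rw [this] at h
              linear_combination -h
            · have : δ (x, y) = 0 := by simp [hδ, hp]
              rw [this] at h
              simpa using h
          have hsum : f = ∑ p : Q × Q, f p • (fun q => if q = p then (1:ℂ) else 0) := by
            funext q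
            simp [Finset.sum_apply, Pi.smul_apply, smul_eq_mul]
          calc T f (x, y) = T (∑ p : Q × Q, f p • (fun q => if q = p then (1:ℂ) else 0)) (x, y) := by
                rw [← hsum]
            _ = ∑ p : Q × Q, f p * T (fun q => if q = p then (1:ℂ) else 0) (x, y) := by
                rw [map_sum]; simp [Finset.sum_apply]
            _ = 0 := by simp [hdelta]
        · -- nondegenerate case
          set u : Q × Q → ℂ := fun q => if q = (x, y) then (1:ℂ) else 0 with hu
          have hux : u (x, y) = 1 := by simp [hu]
          have huσ : u (σ x, τ y) = 0 := by simp [hu, hd]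
          set c := f (σ x, τ y) with hc
          set f' : Q × Q → ℂ := f - c • 1 with hf'
          have hf'x : f' (x, y) = f (x, y) - c := by simp [hf']
          have hf'σ : f' (σ x, τ y) = 0 := by simp [hf', hc]
          have hφf' : T f' (x, y) = T f (x, y) := by
            simp [hf', map_sub, map_smul, hT1]
          have h1 := hL u f' x y
          have h2 := hL f' u x y
          rw [mul_comm u f'] at h1
          rw [h1] at h2
          rw [hux, huσ, hf'σ, hf'x] at h2
          -- h2 : f'(x,y)*φ(u) + 0*φ(f') = 1*φ(f') + 0*φ(u)  (after rewrites)
          show T f (x, y) = T u (x, y) * (f (x, y) - f (σ x, τ y))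
          rw [← hφf', ← hc]
          linear_combination h2
      · rw [hV f x y (Or.inr hy), Set.indicator_of_notMem hy]; ring
    · rw [hV f x y (Or.inl hx), Set.indicator_of_notMem hx]; ring
  · rintro ⟨β, hβ⟩
    constructor
    · intro f g x y
      rw [hβ (f * g), hβ f, hβ g]
      simp only [Pi.mul_apply]
      ring
    · intro f x y h
      rw [hβ f]
      rcases h with h | h
      · rw [Set.indicator_of_notMem h]; ring
      · rw [Set.indicator_of_notMem h]; ring
end

section
/- There exists a ∈ ℝ such that (Δ_ω ω̂)(ω k) = a · ω̂(ω k) for all k with 2 ≤ k ≤ n−1 (i.e., ω̂ is an eigenvector of the difference operator along the path, ω is a discrete geodesic) if and only if there exists c ∈ ℝ such that μc (ω k) (ω (k−1)) = c · μc (ω (k−1)) (ω (k−2)) for all k with 2 ≤ k ≤ n−1. (This is Theorem 4.3: an n-path ω is a discrete geodesic if and only if the conditional q-measures satisfy μ_n(x | ω_{|x|−1}) = c · μ_n(ω_{|x|−1} | ω_{|x|−2}) whenever ω_{|x|} = x with |x| ≥ 3.) -/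
/-- **Theorem 4.3**: an `n`-path `ω` is a discrete geodesic (`ω̂` is an
eigenvector of the difference operator `Δ_ω` along the path) iff there is a
`c ∈ ℝ` with `μ_n(ω k | ω (k−1)) = c ⬝ μ_n(ω (k−1) | ω (k−2))` for all
`2 ≤ k ≤ n−1`. Here `ω̂` and `Δ_ω` are given by their defining properties. -/
theorem stmt7 {Q : Type*} [Fintype Q] (n : ℕ) (hn : 3 ≤ n)
    (ω : Fin n → Q) (hinj : Function.Injective ω) (μc : Q → Q → ℝ)
    (hμ : ∀ k, ∀ h1 : 1 ≤ k, ∀ h2 : k ≤ n - 1,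
      μc (ω ⟨k, by omega⟩) (ω ⟨k - 1, by omega⟩) ≠ 0)
    (ωhat : Q → ℝ)
    (hωhat : ∀ k, ∀ h1 : 1 ≤ k, ∀ h2 : k ≤ n - 1,
      ωhat (ω ⟨k, by omega⟩) = μc (ω ⟨k, by omega⟩) (ω ⟨k - 1, by omega⟩))
    (hωhat0 : ∀ x : Q,
      (∀ k, ∀ h1 : 1 ≤ k, ∀ h2 : k ≤ n - 1, x ≠ ω ⟨k, by omega⟩) → ωhat x = 0)
    (Δ : (Q → ℝ) → Q → ℝ)
    (hΔ : ∀ f : Q → ℝ, ∀ k, ∀ h1 : 1 ≤ k, ∀ h2 : k ≤ n - 1,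
      Δ f (ω ⟨k, by omega⟩) = f (ω ⟨k, by omega⟩) - f (ω ⟨k - 1, by omega⟩))
    (hΔ0 : ∀ f : Q → ℝ, ∀ x : Q,
      (∀ k, ∀ h1 : 1 ≤ k, ∀ h2 : k ≤ n - 1, x ≠ ω ⟨k, by omega⟩) → Δ f x = 0) :
    (∃ a : ℝ, ∀ k, ∀ h1 : 2 ≤ k, ∀ h2 : k ≤ n - 1,
      Δ ωhat (ω ⟨k, by omega⟩) = a * ωhat (ω ⟨k, by omega⟩)) ↔
    (∃ c : ℝ, ∀ k, ∀ h1 : 2 ≤ k, ∀ h2 : k ≤ n - 1,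
      μc (ω ⟨k, by omega⟩) (ω ⟨k - 1, by omega⟩) =
        c * μc (ω ⟨k - 1, by omega⟩) (ω ⟨k - 2, by omega⟩)) := by
  have key : ∀ k, ∀ h1 : 2 ≤ k, ∀ h2 : k ≤ n - 1,
      Δ ωhat (ω ⟨k, by omega⟩) =
        μc (ω ⟨k, by omega⟩) (ω ⟨k - 1, by omega⟩) -
          μc (ω ⟨k - 1, by omega⟩) (ω ⟨k - 2, by omega⟩) := by
    intro k h1 h2
    have e1 := hΔ ωhat k (by omega) h2
    have e2 := hωhat k (by omega) h2
    have e3 := hωhat (k - 1) (by omega) (by omega)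
    have hfin : (⟨k - 1 - 1, by omega⟩ : Fin n) = ⟨k - 2, by omega⟩ := by
      apply Fin.ext; simp; omega
    rw [hfin] at e3
    rw [e1, e2, e3]
  have hval : ∀ k, ∀ h1 : 2 ≤ k, ∀ h2 : k ≤ n - 1,
      ωhat (ω ⟨k, by omega⟩) = μc (ω ⟨k, by omega⟩) (ω ⟨k - 1, by omega⟩) :=
    fun k h1 h2 => hωhat k (by omega) h2
  constructor
  · rintro ⟨a, ha⟩
    -- show 1 - a ≠ 0 using k = 2
    have h2le : (2 : ℕ) ≤ n - 1 := by omega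
    have hk2 := ha 2 le_rfl h2le
    rw [key 2 le_rfl h2le, hval 2 le_rfl h2le] at hk2
    have hne1 := hμ 1 le_rfl (by omega)
    have hne2 := hμ 2 (by omega) h2le
    have hane : 1 - a ≠ 0 := by
      intro h
      have : a = 1 := by linarith
      subst this
      apply hne1
      have : μc (ω ⟨1, by omega⟩) (ω ⟨0, by omega⟩) = 0 := by linarith
      simpa using this
    refine ⟨(1 - a)⁻¹, fun k h1 h2 => ?_⟩
    have hk := ha k h1 h2
    rw [key k h1 h2, hval k h1 h2] at hk
    field_simp
    linarith
  · rintro ⟨c, hc⟩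
    have h2le : (2 : ℕ) ≤ n - 1 := by omega
    have hne2 := hμ 2 (by omega) h2le
    have hcne : c ≠ 0 := by
      intro h
      apply hne2
      have := hc 2 le_rfl h2le
      rw [h, zero_mul] at this
      simpa using this
    refine ⟨1 - c⁻¹, fun k h1 h2 => ?_⟩
    rw [key k h1 h2, hval k h1 h2, hc k h1 h2]
    field_simp
end
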